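/- Assume the structure constants are nonnegative. Let z ∈ ℝ_+^n × ℝ_+^ν with z ≠ 0. If W^t(z) = 0 for some t ≥ 1, then there exists an integer t_0 with 0 ≤ t_0 < t such that W^{t_0}(z) ≠ 0 and W^{t_0}(z) ∈ O^{n,ν}. -/
import Mathlib


open Filter

/-- The gonosomic evolution operator `W` on `ℝ^n × ℝ^ν` associated with structure constants
`γ_{ipk}` and `γ̃_{ipr}`: it maps `((x_i), (y_p))` to `((x'_k), (y'_r))` with
`x'_k = Σ_{i,p} γ_{ipk} x_i y_p` and `y'_r = Σ_{i,p} γ̃_{ipr} x_i y_p`. -/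
noncomputable def W {n ν : ℕ} (γ : Fin n → Fin ν → Fin n → ℝ)
    (γ' : Fin n → Fin ν → Fin ν → ℝ)
    (z : (Fin n → ℝ) × (Fin ν → ℝ)) : (Fin n → ℝ) × (Fin ν → ℝ) :=
  (fun k => ∑ i, ∑ p, γ i p k * z.1 i * z.2 p,
   fun r => ∑ i, ∑ p, γ' i p r * z.1 i * z.2 p)

/-- The linear form `ϖ(z) = Σ_i x_i + Σ_p y_p` on `ℝ^n × ℝ^ν`. -/
noncomputable def piW {n ν : ℕ} (z : (Fin n → ℝ) × (Fin ν → ℝ)) : ℝ :=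
  ∑ i, z.1 i + ∑ p, z.2 p

/-- `γ_{ip} = Σ_k γ_{ipk}`. -/
noncomputable def gA {n ν : ℕ} (γ : Fin n → Fin ν → Fin n → ℝ)
    (i : Fin n) (p : Fin ν) : ℝ := ∑ k, γ i p k

/-- `γ̃_{ip} = Σ_r γ̃_{ipr}`. -/
noncomputable def gB {n ν : ℕ} (γ' : Fin n → Fin ν → Fin ν → ℝ)
    (i : Fin n) (p : Fin ν) : ℝ := ∑ r, γ' i p r

/-- `σ_{ip} = γ_{ip} + γ̃_{ip}`. -/
noncomputable def σc {n ν : ℕ} (γ : Fin n → Fin ν → Fin n → ℝ)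
    (γ' : Fin n → Fin ν → Fin ν → ℝ) (i : Fin n) (p : Fin ν) : ℝ :=
  gA γ i p + gB γ' i p

/-- The set `O^{n,ν}` of nonnegative points `((x_i),(y_p))` with `x_i y_p = 0` for every
pair `(i,p)` with `σ_{ip} ≠ 0`. -/
def Oset {n ν : ℕ} (γ : Fin n → Fin ν → Fin n → ℝ)
    (γ' : Fin n → Fin ν → Fin ν → ℝ) : Set ((Fin n → ℝ) × (Fin ν → ℝ)) :=
  {z | (∀ i, 0 ≤ z.1 i) ∧ (∀ p, 0 ≤ z.2 p) ∧
    ∀ i p, σc γ γ' i p ≠ 0 → z.1 i * z.2 p = 0}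

/-- The set `S^{n,ν} = S^{n+ν-1} \ O^{n,ν}`, where `S^{n+ν-1}` is the simplex of nonnegative
points with `ϖ(z) = 1`. -/
def Sset {n ν : ℕ} (γ : Fin n → Fin ν → Fin n → ℝ)
    (γ' : Fin n → Fin ν → Fin ν → ℝ) : Set ((Fin n → ℝ) × (Fin ν → ℝ)) :=
  {z | (∀ i, 0 ≤ z.1 i) ∧ (∀ p, 0 ≤ z.2 p) ∧ piW z = 1} \ Oset γ γ'

/-- The normalized gonosomic operator `V(z) = (1/ϖ(W z)) • W z` (junk value when
`ϖ(W z) = 0`, since in `ℝ` we have `0⁻¹ = 0`). -/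
noncomputable def V {n ν : ℕ} (γ : Fin n → Fin ν → Fin n → ℝ)
    (γ' : Fin n → Fin ν → Fin ν → ℝ)
    (z : (Fin n → ℝ) × (Fin ν → ℝ)) : (Fin n → ℝ) × (Fin ν → ℝ) :=
  (piW (W γ γ' z))⁻¹ • W γ γ' z

lemma W_nonneg {n ν : ℕ} (γ : Fin n → Fin ν → Fin n → ℝ)
    (γ' : Fin n → Fin ν → Fin ν → ℝ)
    (hγ : ∀ i p k, 0 ≤ γ i p k) (hγ' : ∀ i p r, 0 ≤ γ' i p r)
    (w : (Fin n → ℝ) × (Fin ν → ℝ)) (h1 : ∀ i, 0 ≤ w.1 i) (h2 : ∀ p, 0 ≤ w.2 p) :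
    (∀ i, 0 ≤ (W γ γ' w).1 i) ∧ (∀ p, 0 ≤ (W γ γ' w).2 p) := by
  constructor
  · intro k
    show (0:ℝ) ≤ ∑ i, ∑ p, γ i p k * w.1 i * w.2 p
    exact Finset.sum_nonneg fun i _ => Finset.sum_nonneg fun p _ =>
      mul_nonneg (mul_nonneg (hγ i p k) (h1 i)) (h2 p)
  · intro r
    show (0:ℝ) ≤ ∑ i, ∑ p, γ' i p r * w.1 i * w.2 p
    exact Finset.sum_nonneg fun i _ => Finset.sum_nonneg fun p _ =>
      mul_nonneg (mul_nonneg (hγ' i p r) (h1 i)) (h2 p)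

lemma iter_nonneg {n ν : ℕ} (γ : Fin n → Fin ν → Fin n → ℝ)
    (γ' : Fin n → Fin ν → Fin ν → ℝ)
    (hγ : ∀ i p k, 0 ≤ γ i p k) (hγ' : ∀ i p r, 0 ≤ γ' i p r)
    (z : (Fin n → ℝ) × (Fin ν → ℝ)) (h1 : ∀ i, 0 ≤ z.1 i) (h2 : ∀ p, 0 ≤ z.2 p)
    (m : ℕ) :
    (∀ i, 0 ≤ ((W γ γ')^[m] z).1 i) ∧ (∀ p, 0 ≤ ((W γ γ')^[m] z).2 p) := by
  induction m with
  | zero => exact ⟨h1, h2⟩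
  | succ m ih =>
    rw [Function.iterate_succ_apply']
    exact W_nonneg γ γ' hγ hγ' _ ih.1 ih.2

lemma mem_Oset_of_W_eq_zero {n ν : ℕ} (γ : Fin n → Fin ν → Fin n → ℝ)
    (γ' : Fin n → Fin ν → Fin ν → ℝ)
    (hγ : ∀ i p k, 0 ≤ γ i p k) (hγ' : ∀ i p r, 0 ≤ γ' i p r)
    (w : (Fin n → ℝ) × (Fin ν → ℝ)) (h1 : ∀ i, 0 ≤ w.1 i) (h2 : ∀ p, 0 ≤ w.2 p)
    (hW : W γ γ' w = 0) : w ∈ Oset γ γ' := by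
  refine ⟨h1, h2, fun i p hσ => ?_⟩
  have key : ∀ c : ℝ, 0 ≤ c →
      ((∃ k, c = γ i p k ∧ (W γ γ' w).1 k = 0) ∨
       (∃ r, c = γ' i p r ∧ (W γ γ' w).2 r = 0)) → c * (w.1 i * w.2 p) = 0 := by
    rintro c hc (⟨k, rfl, hk⟩ | ⟨r, rfl, hr⟩)
    · simp only [W] at hk
      have hall := (Finset.sum_eq_zero_iff_of_nonneg (fun i _ =>
        Finset.sum_nonneg fun p _ =>
          mul_nonneg (mul_nonneg (hγ i p k) (h1 i)) (h2 p))).mp hk i (Finset.mem_univ i)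
      have := (Finset.sum_eq_zero_iff_of_nonneg (fun p _ =>
        mul_nonneg (mul_nonneg (hγ i p k) (h1 i)) (h2 p))).mp hall p (Finset.mem_univ p)
      linarith [this, mul_assoc (γ i p k) (w.1 i) (w.2 p)]
    · simp only [W] at hr
      have hall := (Finset.sum_eq_zero_iff_of_nonneg (fun i _ =>
        Finset.sum_nonneg fun p _ =>
          mul_nonneg (mul_nonneg (hγ' i p r) (h1 i)) (h2 p))).mp hr i (Finset.mem_univ i)
      have := (Finset.sum_eq_zero_iff_of_nonneg (fun p _ =>
        mul_nonneg (mul_nonneg (hγ' i p r) (h1 i)) (h2 p))).mp hall p (Finset.mem_univ p)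
      linarith [this, mul_assoc (γ' i p r) (w.1 i) (w.2 p)]
  -- σ i p ≠ 0 and nonneg, so some term positive
  have hσpos : 0 < σc γ γ' i p := by
    rcases lt_or_eq_of_le (add_nonneg
      (Finset.sum_nonneg fun k _ => hγ i p k)
      (Finset.sum_nonneg fun r _ => hγ' i p r) :
      (0:ℝ) ≤ σc γ γ' i p) with h | h
    · exact h
    · exact absurd h.symm hσ
  have hWz1 : ∀ k, (W γ γ' w).1 k = 0 := fun k => by rw [hW]; rfl
  have hWz2 : ∀ r, (W γ γ' w).2 r = 0 := fun r => by rw [hW]; rfl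
  by_contra hne
  have hxy : 0 < w.1 i * w.2 p :=
    lt_of_le_of_ne (mul_nonneg (h1 i) (h2 p)) (Ne.symm hne)
  -- every γ i p k = 0 and γ' i p r = 0
  have hA : ∀ k, γ i p k = 0 := fun k => by
    have := key (γ i p k) (hγ i p k) (Or.inl ⟨k, rfl, hWz1 k⟩)
    rcases mul_eq_zero.mp this with h | h
    · exact h
    · exact absurd h (ne_of_gt hxy)
  have hB : ∀ r, γ' i p r = 0 := fun r => by
    have := key (γ' i p r) (hγ' i p r) (Or.inr ⟨r, rfl, hWz2 r⟩)
    rcases mul_eq_zero.mp this with h | h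
    · exact h
    · exact absurd h (ne_of_gt hxy)
  have : σc γ γ' i p = 0 := by
    simp [σc, gA, gB, hA, hB]
  exact absurd this (ne_of_gt hσpos)

/-- Suppose the structure constants are nonnegative and let `z` be
nonnegative with `z ≠ 0`.  If `W^t(z) = 0` for some `t ≥ 1`, then there exists `t₀` with
`0 ≤ t₀ < t` such that `W^{t₀}(z) ≠ 0` and `W^{t₀}(z) ∈ O^{n,ν}`. -/
theorem stmt_15 {n ν : ℕ} (hn : 1 ≤ n) (hν : 1 ≤ ν)
    (γ : Fin n → Fin ν → Fin n → ℝ) (γ' : Fin n → Fin ν → Fin ν → ℝ)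
    (hγ : ∀ i p k, 0 ≤ γ i p k) (hγ' : ∀ i p r, 0 ≤ γ' i p r)
    (z : (Fin n → ℝ) × (Fin ν → ℝ)) (hz1 : ∀ i, 0 ≤ z.1 i) (hz2 : ∀ p, 0 ≤ z.2 p)
    (hz0 : z ≠ 0)
    (t : ℕ) (ht : 1 ≤ t) (hWt : (W γ γ')^[t] z = 0) :
    ∃ t₀ : ℕ, t₀ < t ∧ (W γ γ')^[t₀] z ≠ 0 ∧ (W γ γ')^[t₀] z ∈ Oset γ γ' := by
  have hP : ∃ m, (W γ γ')^[m] z = 0 := ⟨t, hWt⟩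
  classical
  set t' := Nat.find hP with ht'
  have ht'0 : (W γ γ')^[t'] z = 0 := Nat.find_spec hP
  have ht'le : t' ≤ t := Nat.find_le hWt
  have ht'pos : 1 ≤ t' := by
    rcases Nat.eq_zero_or_pos t' with h | h
    · exfalso; apply hz0; have := ht'0; rwa [h, Function.iterate_zero_apply] at this
    · exact h
  refine ⟨t' - 1, lt_of_lt_of_le (Nat.sub_lt ht'pos one_pos) ht'le, ?_, ?_⟩
  · exact Nat.find_min hP (Nat.sub_lt ht'pos one_pos)
  · have hnn := iter_nonneg γ γ' hγ hγ' z hz1 hz2 (t' - 1)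
    refine mem_Oset_of_W_eq_zero γ γ' hγ hγ' _ hnn.1 hnn.2 ?_
    have : (W γ γ')^[t' - 1 + 1] z = 0 := by
      rwa [Nat.sub_add_cancel ht'pos]
    rw [Function.iterate_succ_apply'] at this
    exact this
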